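/- For every compact Hausdorff space K, 𝔯(K) ≤ min{π_χ(x) : x ∈ K}, where π_χ(x) is the π-character of x, i.e., the minimal cardinality of a family ℬ of nonempty open sets such that every neighborhood of x contains a member of ℬ. -/
import Mathlib


universe u

/-- A reaping family in a topological space `K`: a family of nonempty open sets such
that every pair of disjoint closed sets is "reaped" by a member of the family. -/
def IsReapingFamily {K : Type u} [TopologicalSpace K] (F : Set (Set K)) : Prop :=
  (∀ W ∈ F, IsOpen W ∧ W.Nonempty) ∧
    ∀ L₁ L₂ : Set K, IsClosed L₁ → IsClosed L₂ → Disjoint L₁ L₂ →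
      ∃ W ∈ F, W ∩ L₁ = ∅ ∨ W ∩ L₂ = ∅

/-- The reaping number `𝔯(K)`: the least cardinality of a reaping family in `K`. -/
noncomputable def reapingNumber (K : Type u) [TopologicalSpace K] : Cardinal.{u} :=
  ⨅ F : {F : Set (Set K) // IsReapingFamily F}, Cardinal.mk F.1

/-- The `π`-character of a point `x`: the minimal cardinality of a family of nonempty
open sets such that every neighborhood of `x` contains a member of the family. -/
noncomputable def piCharacter (K : Type u) [TopologicalSpace K] (x : K) : Cardinal.{u} :=
  ⨅ B : {B : Set (Set K) //
    (∀ W ∈ B, IsOpen W ∧ W.Nonempty) ∧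
      ∀ U : Set K, IsOpen U → x ∈ U → ∃ W ∈ B, W ⊆ U}, Cardinal.mk B.1

/-- Any π-base at a point is a reaping family. -/
theorem isReapingFamily_of_piBase {K : Type u} [TopologicalSpace K] (x : K)
    (B : Set (Set K)) (h₁ : ∀ W ∈ B, IsOpen W ∧ W.Nonempty)
    (h₂ : ∀ U : Set K, IsOpen U → x ∈ U → ∃ W ∈ B, W ⊆ U) :
    IsReapingFamily B := by
  refine ⟨h₁, fun L₁ L₂ hL₁ hL₂ hd => ?_⟩
  by_cases hx : x ∈ L₁
  · have hx2 : x ∉ L₂ := fun h => Set.disjoint_left.mp hd hx h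
    obtain ⟨W, hWB, hWsub⟩ := h₂ L₂ᶜ hL₂.isOpen_compl hx2
    exact ⟨W, hWB, Or.inr (Set.eq_empty_iff_forall_notMem.mpr fun y hy => hWsub hy.1 hy.2)⟩
  · obtain ⟨W, hWB, hWsub⟩ := h₂ L₁ᶜ hL₁.isOpen_compl hx
    exact ⟨W, hWB, Or.inl (Set.eq_empty_iff_forall_notMem.mpr fun y hy => hWsub hy.1 hy.2)⟩

/-- For every (nonempty) compact Hausdorff space `K`,
`𝔯(K) ≤ min {π_χ(x) : x ∈ K}`. -/
theorem reapingNumber_le_min_piCharacter (K : Type u) [TopologicalSpace K]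
    [CompactSpace K] [T2Space K] [Nonempty K] :
    reapingNumber K ≤ ⨅ x : K, piCharacter K x := by
  refine le_ciInf fun x => ?_
  have hne : Nonempty {B : Set (Set K) //
      (∀ W ∈ B, IsOpen W ∧ W.Nonempty) ∧
        ∀ U : Set K, IsOpen U → x ∈ U → ∃ W ∈ B, W ⊆ U} :=
    ⟨⟨{U | IsOpen U ∧ U.Nonempty}, fun W hW => hW,
      fun U hU hxU => ⟨U, ⟨hU, ⟨x, hxU⟩⟩, subset_rfl⟩⟩⟩
  refine le_ciInf fun B => ?_
  obtain ⟨B, h₁, h₂⟩ := B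
  exact ciInf_le' _ (⟨B, isReapingFamily_of_piBase x B h₁ h₂⟩ :
    {F : Set (Set K) // IsReapingFamily F})
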